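/- Lemma (Stability of unicycle dynamics under the stabilizing control law). Consider the unicycle polar-coordinate dynamics ξ̇ = −v cos(φ), φ̇ = (v/ξ) sin(φ) − ω with the control law v = k ξ cos(φ), ω = k(cos(φ)+1) sin(φ) + kφ, for a gain k > 0, so that the closed-loop dynamics are ξ̇ = −k ξ cos²(φ), φ̇ = −k sin(φ) − k φ. Then (ξ,φ) = (0,0) is the unique equilibrium point of the closed loop, and it is exponentially stable: every differentiable solution (ξ(t), φ(t)) on [0,∞) of the closed-loop equations with |φ(0)| ≤ π satisfies, for all t ≥ 0, |φ(t)| ≤ |φ(0)| e^{−kt} and |ξ(t)| ≤ e^{φ(0)²/2} |ξ(0)| e^{−kt}. -/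

import Mathlib

open Real

/-- Forward invariance of the upper bound `f t ≤ π` for the angle dynamics. -/
lemma unicycle_phi_le_pi (k : ℝ) (hk : 0 < k) (f : ℝ → ℝ)
    (hf : ∀ t, 0 ≤ t → HasDerivAt f (-k * Real.sin (f t) - k * f t) t)
    (h0 : f 0 ≤ π) : ∀ t, 0 ≤ t → f t ≤ π := by
  intro t₁ ht₁
  by_contra hcon
  push_neg at hcon
  have ht₁' : 0 < t₁ := by
    rcases eq_or_lt_of_le ht₁ with h | h
    · exact absurd (h ▸ h0) (by rw [← h] at hcon; linarith)
    · exact h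
  have hcont : ContinuousOn f (Set.Icc 0 t₁) := fun s hs =>
    ((hf s hs.1).continuousAt).continuousWithinAt
  set S : Set ℝ := Set.Icc 0 t₁ ∩ f ⁻¹' Set.Iic π with hSdef
  have hS0 : (0 : ℝ) ∈ S := ⟨⟨le_refl 0, ht₁⟩, h0⟩
  have hSc : IsClosed S := hcont.preimage_isClosed_of_isClosed isClosed_Icc isClosed_Iic
  have hSbdd : BddAbove S := ⟨t₁, fun x hx => hx.1.2⟩
  have hTS : sSup S ∈ S := hSc.csSup_mem ⟨0, hS0⟩ hSbdd
  obtain ⟨T, hTdef⟩ : ∃ T, T = sSup S := ⟨sSup S, rfl⟩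
  rw [← hTdef] at hTS
  have hT0 : 0 ≤ T := hTS.1.1
  have hT1 : T ≤ t₁ := hTS.1.2
  have hfT : f T ≤ π := hTS.2
  have hTlt : T < t₁ := lt_of_le_of_ne hT1 (by rintro rfl; exact absurd hfT (not_le.mpr hcon))
  have hIoo : ∀ s ∈ Set.Ioo T t₁, π < f s := by
    intro s hs
    by_contra hle
    push_neg at hle
    have hsS : s ∈ S := ⟨⟨le_trans hT0 hs.1.le, hs.2.le⟩, hle⟩
    exact absurd (hTdef ▸ le_csSup hSbdd hsS) (not_le.mpr hs.1)
  have hanti : StrictAntiOn f (Set.Icc T t₁) := by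
    apply strictAntiOn_of_deriv_neg (convex_Icc T t₁)
      (hcont.mono (Set.Icc_subset_Icc_left hT0))
    intro x hx
    rw [interior_Icc] at hx
    have hx0 : 0 ≤ x := le_trans hT0 hx.1.le
    rw [(hf x hx0).deriv]
    have h1 : π < f x := hIoo x hx
    have h2 : -1 ≤ Real.sin (f x) := Real.neg_one_le_sin (f x)
    have hpi : 1 < π := by linarith [Real.pi_gt_three]
    nlinarith
  have := hanti (Set.left_mem_Icc.mpr hTlt.le) (Set.right_mem_Icc.mpr hTlt.le) hTlt
  linarith

theorem unicycle_closed_loop_stability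
    (k : ℝ) (hk : 0 < k)
    (ξ φ : ℝ → ℝ)
    (hξ : ∀ t, 0 ≤ t → HasDerivAt ξ (-k * ξ t * Real.cos (φ t) ^ 2) t)
    (hφ : ∀ t, 0 ≤ t → HasDerivAt φ (-k * Real.sin (φ t) - k * φ t) t)
    (hφ0 : |φ 0| ≤ π) :
    (∀ p q : ℝ, (-k * p * Real.cos q ^ 2 = 0 ∧ -k * Real.sin q - k * q = 0) ↔
        (p = 0 ∧ q = 0)) ∧
    (∀ t, 0 ≤ t →
      |φ t| ≤ |φ 0| * Real.exp (-k * t) ∧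
      |ξ t| ≤ Real.exp ((φ 0) ^ 2 / 2) * |ξ 0| * Real.exp (-k * t)) := by
  constructor
  · -- unique equilibrium
    intro p q
    constructor
    · rintro ⟨h1, h2⟩
      have hq : q = 0 := by
        by_contra hq0
        rcases lt_or_gt_of_ne hq0 with hneg | hpos
        · -- q < 0 : sin q + q < 0
          rcases le_or_gt (-π) q with h | h
          · have : Real.sin q ≤ 0 := by
              have := Real.sin_nonneg_of_nonneg_of_le_pi (x := -q) (by linarith) (by linarith)
              rw [Real.sin_neg] at this; linarith
            nlinarith
          · have := Real.sin_le_one q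
            nlinarith [Real.pi_gt_three]
        · rcases le_or_gt q π with h | h
          · have : 0 ≤ Real.sin q := Real.sin_nonneg_of_nonneg_of_le_pi hpos.le h
            nlinarith
          · have := Real.neg_one_le_sin q
            nlinarith [Real.pi_gt_three]
      subst hq
      refine ⟨?_, rfl⟩
      simp only [Real.cos_zero, one_pow, mul_one] at h1
      have : p = 0 := by
        by_contra hp
        exact hp (by nlinarith)
      exact this
    · rintro ⟨rfl, rfl⟩
      simp
  · -- stability estimates
    intro t ht
    set a := φ 0 with ha
    -- invariance |φ s| ≤ π for s ≥ 0
    have hinv : ∀ s, 0 ≤ s → |φ s| ≤ π := by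
      intro s hs
      have hupper : φ s ≤ π := unicycle_phi_le_pi k hk φ hφ (abs_le.mp hφ0).2 s hs
      have hlower : -π ≤ φ s := by
        have hneg : ∀ u, 0 ≤ u → HasDerivAt (fun u => -φ u)
            (-k * Real.sin (-φ u) - k * (-φ u)) u := by
          intro u hu
          have := (hφ u hu).neg
          refine this.congr_deriv ?_
          rw [Real.sin_neg]; ring
        have := unicycle_phi_le_pi k hk (fun u => -φ u) hneg
          (neg_le.mpr (abs_le.mp hφ0).1) s hs
        have h' : -φ s ≤ π := this
        linarith
      exact abs_le.mpr ⟨hlower, hupper⟩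
    -- G s = φ s ^ 2 * exp (2 k s) is antitone on [0, ∞)
    have hG : ∀ s, 0 ≤ s → HasDerivAt (fun u => φ u ^ 2 * Real.exp (2 * k * u))
        (Real.exp (2 * k * s) * (-(2 * k) * (φ s * Real.sin (φ s)))) s := by
      intro s hs
      have h1 : HasDerivAt (fun u => φ u ^ 2)
          ((2 : ℕ) * φ s ^ 1 * (-k * Real.sin (φ s) - k * φ s)) s := (hφ s hs).pow 2
      have h2 : HasDerivAt (fun u => Real.exp (2 * k * u))
          (Real.exp (2 * k * s) * (2 * k)) s := by
        simpa using ((hasDerivAt_id s).const_mul (2 * k)).exp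
      have := h1.mul h2
      refine this.congr_deriv ?_
      push_cast
      ring
    have hGanti : AntitoneOn (fun u => φ u ^ 2 * Real.exp (2 * k * u)) (Set.Ici 0) := by
      apply antitoneOn_of_deriv_nonpos (convex_Ici 0)
      · intro s hs
        exact ((hG s hs).continuousAt).continuousWithinAt
      · intro s hs
        rw [interior_Ici] at hs
        exact ((hG s (le_of_lt hs)).differentiableAt).differentiableWithinAt
      · intro s hs
        rw [interior_Ici] at hs
        rw [(hG s hs.le).deriv]
        have hφs : 0 ≤ φ s * Real.sin (φ s) := by
          rcases le_or_gt 0 (φ s) with h | h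
          · exact mul_nonneg h (Real.sin_nonneg_of_nonneg_of_le_pi h
              ((abs_le.mp (hinv s hs.le)).2))
          · have : Real.sin (φ s) ≤ 0 := by
              have := Real.sin_nonneg_of_nonneg_of_le_pi (x := -(φ s)) (by linarith)
                (by linarith [(abs_le.mp (hinv s hs.le)).1])
              rw [Real.sin_neg] at this; linarith
            nlinarith
        have hEp := Real.exp_pos (2 * k * s)
        nlinarith [mul_nonneg hEp.le hφs]
    have hφsq : ∀ s, 0 ≤ s → φ s ^ 2 ≤ a ^ 2 * Real.exp (-(2 * k) * s) := by
      intro s hs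
      have := hGanti (Set.self_mem_Ici) (Set.mem_Ici.mpr hs) hs
      simp only [mul_zero, Real.exp_zero, mul_one] at this
      have hE : 0 < Real.exp (2 * k * s) := Real.exp_pos _
      rw [show (-(2 * k) * s) = -(2 * k * s) by ring, Real.exp_neg]
      rw [show a ^ 2 * (Real.exp (2 * k * s))⁻¹ = a ^ 2 / Real.exp (2 * k * s) by ring,
        le_div_iff₀ hE, ha]
      linarith
    -- the φ bound
    have hφbound : |φ t| ≤ |a| * Real.exp (-k * t) := by
      have h2 : φ t ^ 2 ≤ (|a| * Real.exp (-k * t)) ^ 2 := by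
        have := hφsq t ht
        calc φ t ^ 2 ≤ a ^ 2 * Real.exp (-(2 * k) * t) := this
          _ = (|a| * Real.exp (-k * t)) ^ 2 := by
              rw [mul_pow, sq_abs, ← Real.exp_nat_mul]
              push_cast
              ring_nf
      calc |φ t| = Real.sqrt (φ t ^ 2) := (Real.sqrt_sq_eq_abs _).symm
        _ ≤ Real.sqrt ((|a| * Real.exp (-k * t)) ^ 2) := Real.sqrt_le_sqrt h2
        _ = |a| * Real.exp (-k * t) := Real.sqrt_sq (by positivity)
    refine ⟨hφbound, ?_⟩
    -- W s = ξ s ^ 2 * exp (2 k s) * exp (a ^ 2 * exp (-(2k) s)) is antitone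
    set W : ℝ → ℝ := fun u =>
      ξ u ^ 2 * Real.exp (2 * k * u) * Real.exp (a ^ 2 * Real.exp (-(2 * k) * u)) with hWdef
    have hW : ∀ s, 0 ≤ s → HasDerivAt W
        (((2 : ℕ) * ξ s ^ 1 * (-k * ξ s * Real.cos (φ s) ^ 2) * Real.exp (2 * k * s)
            + ξ s ^ 2 * (Real.exp (2 * k * s) * (2 * k)))
            * Real.exp (a ^ 2 * Real.exp (-(2 * k) * s))
          + ξ s ^ 2 * Real.exp (2 * k * s)
            * (Real.exp (a ^ 2 * Real.exp (-(2 * k) * s))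
              * (a ^ 2 * (Real.exp (-(2 * k) * s) * -(2 * k))))) s := by
      intro s hs
      have h1 : HasDerivAt (fun u => ξ u ^ 2)
          ((2 : ℕ) * ξ s ^ 1 * (-k * ξ s * Real.cos (φ s) ^ 2)) s := (hξ s hs).pow 2
      have h2 : HasDerivAt (fun u => Real.exp (2 * k * u))
          (Real.exp (2 * k * s) * (2 * k)) s := by
        simpa using ((hasDerivAt_id s).const_mul (2 * k)).exp
      have h3 : HasDerivAt (fun u => Real.exp (a ^ 2 * Real.exp (-(2 * k) * u)))
          (Real.exp (a ^ 2 * Real.exp (-(2 * k) * s))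
            * (a ^ 2 * (Real.exp (-(2 * k) * s) * -(2 * k)))) s := by
        have hi : HasDerivAt (fun u => Real.exp (-(2 * k) * u))
            (Real.exp (-(2 * k) * s) * -(2 * k)) s := by
          simpa using ((hasDerivAt_id s).const_mul (-(2 * k))).exp
        exact (hi.const_mul (a ^ 2)).exp
      exact (h1.mul h2).mul h3
    have hWanti : AntitoneOn W (Set.Ici 0) := by
      apply antitoneOn_of_deriv_nonpos (convex_Ici 0)
      · intro s hs
        exact ((hW s hs).continuousAt).continuousWithinAt
      · intro s hs
        rw [interior_Ici] at hs
        exact ((hW s hs.le).differentiableAt).differentiableWithinAt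
      · intro s hs
        rw [interior_Ici] at hs
        rw [(hW s hs.le).deriv]
        have hsin : Real.sin (φ s) ^ 2 ≤ a ^ 2 * Real.exp (-(2 * k) * s) :=
          le_trans (Real.sin_sq_le_sq) (hφsq s hs.le)
        have hpyth : Real.sin (φ s) ^ 2 + Real.cos (φ s) ^ 2 = 1 := Real.sin_sq_add_cos_sq _
        have hE1 : 0 < Real.exp (2 * k * s) := Real.exp_pos _
        have hE2 : 0 < Real.exp (a ^ 2 * Real.exp (-(2 * k) * s)) := Real.exp_pos _
        have key : 0 ≤ Real.exp (2 * k * s) * Real.exp (a ^ 2 * Real.exp (-(2 * k) * s))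
            * ξ s ^ 2 * (a ^ 2 * Real.exp (-(2 * k) * s) - Real.sin (φ s) ^ 2) := by
          have : 0 ≤ a ^ 2 * Real.exp (-(2 * k) * s) - Real.sin (φ s) ^ 2 := by linarith
          positivity
        have hc : Real.cos (φ s) ^ 2 = 1 - Real.sin (φ s) ^ 2 := by linarith
        push_cast
        rw [hc]
        nlinarith [mul_nonneg hk.le key]
    have hWle : W t ≤ W 0 := hWanti Set.self_mem_Ici (Set.mem_Ici.mpr ht) ht
    have hW0 : W 0 = ξ 0 ^ 2 * Real.exp (a ^ 2) := by
      simp [hWdef]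
    have hξsq : ξ t ^ 2 ≤ (Real.exp (a ^ 2 / 2) * |ξ 0| * Real.exp (-k * t)) ^ 2 := by
      have hrhs : (Real.exp (a ^ 2 / 2) * |ξ 0| * Real.exp (-k * t)) ^ 2
          = ξ 0 ^ 2 * Real.exp (a ^ 2) * Real.exp (-(2 * k) * t) := by
        rw [mul_pow, mul_pow, sq_abs, ← Real.exp_nat_mul, ← Real.exp_nat_mul]
        push_cast
        rw [show (2:ℝ) * (a ^ 2 / 2) = a ^ 2 by ring]
        ring_nf
      rw [hrhs]
      have hWle' : ξ t ^ 2 * Real.exp (2 * k * t) * Real.exp (a ^ 2 * Real.exp (-(2 * k) * t))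
          ≤ ξ 0 ^ 2 * Real.exp (a ^ 2) := hW0 ▸ hWle
      have hge1 : 1 ≤ Real.exp (a ^ 2 * Real.exp (-(2 * k) * t)) :=
        Real.one_le_exp (by positivity)
      have h1 : ξ t ^ 2 * Real.exp (2 * k * t) ≤ ξ 0 ^ 2 * Real.exp (a ^ 2) := by
        have hXnn : 0 ≤ ξ t ^ 2 * Real.exp (2 * k * t) := by positivity
        nlinarith [mul_le_mul_of_nonneg_left hge1 hXnn]
      have hE : 0 < Real.exp (2 * k * t) := Real.exp_pos _
      rw [show (-(2 * k) * t) = -(2 * k * t) by ring, Real.exp_neg]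
      rw [show ξ 0 ^ 2 * Real.exp (a ^ 2) * (Real.exp (2 * k * t))⁻¹
          = ξ 0 ^ 2 * Real.exp (a ^ 2) / Real.exp (2 * k * t) by ring, le_div_iff₀ hE]
      linarith
    calc |ξ t| = Real.sqrt (ξ t ^ 2) := (Real.sqrt_sq_eq_abs _).symm
      _ ≤ Real.sqrt ((Real.exp (a ^ 2 / 2) * |ξ 0| * Real.exp (-k * t)) ^ 2) :=
          Real.sqrt_le_sqrt hξsq
      _ = Real.exp (a ^ 2 / 2) * |ξ 0| * Real.exp (-k * t) := Real.sqrt_sq (by positivity)
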